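/- Let X₁, …, Xₙ be independent random variables each with the SN(1) distribution. Then X₍ₙ₎ = max{X₁, …, Xₙ} has the Balakrishnan skew-normal distribution SNB_{2n−1}(1): the law of the maximum has density x ↦ 2n φ(x) Φ(x)^{2n−1} with respect to Lebesgue measure. -/

import Mathlib

open MeasureTheory

/-- Standard normal density. -/
noncomputable def normPdf (x : ℝ) : ℝ := Real.exp (-x ^ 2 / 2) / Real.sqrt (2 * Real.pi)

/-- Standard normal cdf. -/
noncomputable def normCdf (x : ℝ) : ℝ := ∫ t in Set.Iic x, normPdf t

/-- Skew-normal cdf with parameter `l`. -/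
noncomputable def snCdf (l z : ℝ) : ℝ := ∫ t in Set.Iic z, 2 * normPdf t * normCdf (l * t)

/-- The skew-normal measure `SN(l)`: density `x ↦ 2 φ(x) Φ(l x)`. -/
noncomputable def snMeasure (l : ℝ) : Measure ℝ :=
  volume.withDensity fun x => ENNReal.ofReal (2 * normPdf x * normCdf (l * x))

/-- The Beta function. -/
noncomputable def betaFn (a b : ℝ) : ℝ := Real.Gamma a * Real.Gamma b / Real.Gamma (a + b)

section Aux

open Set Filter Topology

lemma normPdf_nonneg (x : ℝ) : 0 ≤ normPdf x :=
  div_nonneg (Real.exp_pos _).le (Real.sqrt_nonneg _)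

lemma normPdf_continuous : Continuous normPdf := by
  unfold normPdf; fun_prop

lemma normPdf_integrable : Integrable normPdf := by
  have h : Integrable fun x : ℝ => Real.exp (-(1/2 : ℝ) * x ^ 2) :=
    integrable_exp_neg_mul_sq (by norm_num)
  have : normPdf = fun x => Real.exp (-(1/2 : ℝ) * x ^ 2) * (Real.sqrt (2 * Real.pi))⁻¹ := by
    funext x
    rw [normPdf, div_eq_mul_inv]
    congr 2
    ring
  rw [this]
  exact h.mul_const _

lemma normCdf_nonneg (x : ℝ) : 0 ≤ normCdf x :=
  setIntegral_nonneg measurableSet_Iic fun t _ => normPdf_nonneg t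

lemma normCdf_le_one (x : ℝ) : normCdf x ≤ 1 := by
  have h1 : normCdf x ≤ ∫ t, normPdf t :=
    setIntegral_le_integral normPdf_integrable (Filter.Eventually.of_forall normPdf_nonneg)
  have h2 : ∫ t, normPdf t = 1 := by
    unfold normPdf
    rw [integral_div]
    have : ∫ x : ℝ, Real.exp (-x ^ 2 / 2) = ∫ x : ℝ, Real.exp (-(1/2 : ℝ) * x ^ 2) := by
      congr 1; funext x; congr 1; ring
    rw [this, integral_gaussian]
    have h2pi : (0 : ℝ) < 2 * Real.pi := by positivity
    rw [show Real.pi / (1/2 : ℝ) = 2 * Real.pi by ring]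
    exact div_self (by positivity)
  linarith

lemma hasDerivAt_normCdf (x : ℝ) : HasDerivAt normCdf (normPdf x) x := by
  have key : ∀ y : ℝ, normCdf y = normCdf 0 + ∫ t in (0:ℝ)..y, normPdf t := by
    intro y
    have := intervalIntegral.integral_Iic_sub_Iic
      (normPdf_integrable.integrableOn (s := Iic 0))
      (normPdf_integrable.integrableOn (s := Iic y))
    unfold normCdf
    linarith
  have h : HasDerivAt (fun u : ℝ => ∫ t in (0:ℝ)..u, normPdf t) (normPdf x) x :=
    intervalIntegral.integral_hasDerivAt_right
      (normPdf_integrable.intervalIntegrable)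
      (normPdf_continuous.stronglyMeasurable.stronglyMeasurableAtFilter)
      (normPdf_continuous.continuousAt)
  have h' := h.const_add (normCdf 0)
  exact h'.congr_of_eventuallyEq (Filter.Eventually.of_forall key)

lemma normCdf_continuous : Continuous normCdf :=
  continuous_iff_continuousAt.2 fun x => (hasDerivAt_normCdf x).continuousAt

lemma tendsto_normCdf_atBot : Tendsto normCdf atBot (𝓝 0) := by
  have h := intervalIntegral_tendsto_integral_Iic (μ := volume) (f := normPdf) 0
    (normPdf_integrable.integrableOn) tendsto_id
  have h2 : Tendsto (fun x : ℝ => normCdf 0 - ∫ t in x..(0:ℝ), normPdf t) atBot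
      (𝓝 (normCdf 0 - ∫ t in Iic 0, normPdf t)) := (tendsto_const_nhds.sub h)
  have h3 : (fun x : ℝ => normCdf 0 - ∫ t in x..(0:ℝ), normPdf t) = normCdf := by
    funext y
    have := intervalIntegral.integral_Iic_sub_Iic
      (normPdf_integrable.integrableOn (s := Iic y))
      (normPdf_integrable.integrableOn (s := Iic 0))
    unfold normCdf
    linarith
  rw [h3] at h2
  simpa [normCdf] using h2

/-- Integrability of `c * φ * Φ^k` on any set. -/
lemma snb_integrable (c : ℝ) (hc : 0 ≤ c) (k : ℕ) :
    Integrable (fun t => c * normPdf t * normCdf t ^ k) := by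
  refine Integrable.mono (normPdf_integrable.const_mul c) ?_ ?_
  · exact (((continuous_const.mul normPdf_continuous)).mul (normCdf_continuous.pow k)).aestronglyMeasurable
  · refine Filter.Eventually.of_forall fun t => ?_
    have hnn1 : 0 ≤ c * normPdf t * normCdf t ^ k :=
      mul_nonneg (mul_nonneg hc (normPdf_nonneg t)) (pow_nonneg (normCdf_nonneg t) k)
    have hnn2 : 0 ≤ c * normPdf t := mul_nonneg hc (normPdf_nonneg t)
    rw [Real.norm_eq_abs, Real.norm_eq_abs, abs_of_nonneg hnn1, abs_of_nonneg hnn2]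
    have h1 : normCdf t ^ k ≤ 1 :=
      pow_le_one₀ (normCdf_nonneg t) (normCdf_le_one t)
    calc c * normPdf t * normCdf t ^ k ≤ c * normPdf t * 1 :=
          mul_le_mul_of_nonneg_left h1 hnn2
      _ = c * normPdf t := by ring

lemma int_snb (m : ℕ) (hm : 0 < m) (a : ℝ) :
    ∫ t in Iic a, (m : ℝ) * normPdf t * normCdf t ^ (m - 1) = normCdf a ^ m := by
  have hderiv : ∀ t : ℝ, t ∈ Iic a →
      HasDerivAt (fun y => normCdf y ^ m) ((m : ℝ) * normPdf t * normCdf t ^ (m - 1)) t := by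
    intro t _
    have h : HasDerivAt (fun y => normCdf y ^ m) ((m : ℝ) * normCdf t ^ (m - 1) * normPdf t) t :=
      (hasDerivAt_normCdf t).pow m
    convert h using 1
    ring
  have hint : IntegrableOn (fun t => (m : ℝ) * normPdf t * normCdf t ^ (m - 1)) (Iic a) :=
    (snb_integrable (m : ℝ) (Nat.cast_nonneg m) (m - 1)).integrableOn
  have htend : Tendsto (fun y => normCdf y ^ m) atBot (𝓝 0) := by
    have := tendsto_normCdf_atBot.pow m
    simpa [zero_pow hm.ne'] using this
  have := integral_Iic_of_hasDerivAt_of_tendsto' hderiv hint htend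
  rw [this, sub_zero]

lemma withDensity_Iic (f : ℝ → ℝ) (hf : Integrable f) (hnn : ∀ x, 0 ≤ f x) (a : ℝ) :
    (volume.withDensity fun x => ENNReal.ofReal (f x)) (Iic a)
      = ENNReal.ofReal (∫ t in Iic a, f t) := by
  rw [withDensity_apply _ measurableSet_Iic,
    ← ofReal_integral_eq_lintegral_ofReal hf.integrableOn
      (Filter.Eventually.of_forall hnn)]

lemma snMeasure_one_Iic (a : ℝ) :
    snMeasure 1 (Iic a) = ENNReal.ofReal (normCdf a ^ 2) := by
  have hint : Integrable (fun x => 2 * normPdf x * normCdf (1 * x)) := by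
    have := snb_integrable 2 (by norm_num) 1
    simpa [pow_one] using this
  have hnn : ∀ x, 0 ≤ 2 * normPdf x * normCdf (1 * x) := fun x =>
    mul_nonneg (mul_nonneg (by norm_num) (normPdf_nonneg x)) (normCdf_nonneg _)
  rw [snMeasure, withDensity_Iic _ hint hnn a]
  congr 1
  have h2 := int_snb 2 (by norm_num) a
  simp only [one_mul]
  simpa [pow_one] using h2

end Aux

/-- The maximum of an i.i.d. sample of size `n` from `SN(1)` has the Balakrishnan
skew-normal distribution `SNB_{2n-1}(1)`, with density `x ↦ 2n φ(x) Φ(x)^{2n-1}`. -/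
theorem sn_max_snb {Ω : Type*} [MeasurableSpace Ω] (μ : Measure Ω)
    [IsProbabilityMeasure μ] (n : ℕ) (hn : 0 < n) (X : Fin n → Ω → ℝ)
    (hmeas : ∀ i, Measurable (X i))
    (hlaw : ∀ i, Measure.map (X i) μ = snMeasure 1)
    (hindep : ProbabilityTheory.iIndepFun X μ) :
    Measure.map
        (fun ω => Finset.univ.sup'
          (Finset.univ_nonempty_iff.mpr (Fin.pos_iff_nonempty.mp hn))
          fun i => X i ω) μ =
      volume.withDensity fun x =>
        ENNReal.ofReal ((2 * n : ℝ) * normPdf x * normCdf x ^ (2 * n - 1)) := by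
  classical
  set M : Ω → ℝ := fun ω => Finset.univ.sup'
    (Finset.univ_nonempty_iff.mpr (Fin.pos_iff_nonempty.mp hn)) fun i => X i ω with hM
  have hM_eq : M = Finset.univ.sup'
      (Finset.univ_nonempty_iff.mpr (Fin.pos_iff_nonempty.mp hn)) X := by
    funext ω; rw [Finset.sup'_apply]
  have hM_meas : Measurable M := by
    rw [hM_eq]; exact Finset.measurable_sup' _ fun i _ => hmeas i
  haveI : IsProbabilityMeasure (Measure.map M μ) :=
    Measure.isProbabilityMeasure_map hM_meas.aemeasurable
  refine MeasureTheory.Measure.ext_of_Iic _ _ fun a => ?_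
  -- LHS
  have hpre : M ⁻¹' Set.Iic a = ⋂ i, X i ⁻¹' Set.Iic a := by
    ext ω
    simp [hM, Finset.sup'_le_iff, Set.mem_iInter]
  have hLHS : Measure.map M μ (Set.Iic a) = ENNReal.ofReal (normCdf a ^ 2) ^ n := by
    rw [Measure.map_apply hM_meas measurableSet_Iic, hpre,
      hindep.meas_iInter (fun i => ⟨Set.Iic a, measurableSet_Iic, rfl⟩)]
    have hival : ∀ i : Fin n, μ (X i ⁻¹' Set.Iic a) = ENNReal.ofReal (normCdf a ^ 2) := by
      intro i
      rw [← Measure.map_apply (hmeas i) measurableSet_Iic, hlaw i, snMeasure_one_Iic]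
    simp only [hival]
    rw [Finset.prod_const, Finset.card_univ, Fintype.card_fin]
  -- RHS
  have h2n : 0 < 2 * n := by omega
  have hRHS : (volume.withDensity fun x =>
      ENNReal.ofReal ((2 * n : ℝ) * normPdf x * normCdf x ^ (2 * n - 1))) (Set.Iic a)
      = ENNReal.ofReal (normCdf a ^ (2 * n)) := by
    have hcast : (2 * n : ℝ) = ((2 * n : ℕ) : ℝ) := by push_cast; ring
    rw [hcast,
      withDensity_Iic _ (snb_integrable _ (Nat.cast_nonneg _) (2 * n - 1))
        (fun x => mul_nonneg (mul_nonneg (Nat.cast_nonneg _) (normPdf_nonneg x))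
          (pow_nonneg (normCdf_nonneg x) _)) a,
      int_snb (2 * n) h2n a]
  rw [hLHS, hRHS, ← ENNReal.ofReal_pow (pow_nonneg (normCdf_nonneg a) 2), ← pow_mul]
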